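/- Let V be a finite-dimensional complex inner product space and let A be a unitary operator on V such that 1 is not an eigenvalue of A (the 'regular' case). Let k ∈ ℕ and v ∈ V. Then there exists an entire function F : ℂ → V such that F(s) = Σ_{n=1}^∞ (2/(nλ(1−x)+2))^{2s} · (xₙ − 1)^k · Aⁿ v for all s ∈ ℂ with Re s > 1/2. (In the regular case the twisted parabolic part of the fast transfer operator, evaluated on monomials at a real point, extends to an entire function of s.) -/

import Mathlib

/-!
STATEMENT 14: In the regular case (the unitary operator `A` has no eigenvalue `1`),
the twisted parabolic part of the fast transfer operator, evaluated on monomials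
at a real point `x < 1`, extends to an entire function of `s`.
Here `xₙ = ((2−nλ)x+nλ)/(nλ(1−x)+2)`.
-/

open Complex

noncomputable section

namespace ParAux

/-- Iterated forward difference (in `t`) of `t ^ (-w)`. -/
def Dl : ℕ → ℂ → ℝ → ℂ
  | 0, w, t => (t : ℂ) ^ (-w)
  | m+1, w, t => Dl m w t - Dl m w (t+1)

lemma Dl_continuousOn (m : ℕ) (w : ℂ) : ContinuousOn (Dl m w) (Set.Ioi (0:ℝ)) := by
  induction m with
  | zero =>
      apply ContinuousOn.cpow (Complex.continuous_ofReal.continuousOn) continuousOn_const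
      intro t ht
      exact ofReal_mem_slitPlane.2 ht
  | succ m ih =>
      refine ih.sub (ih.comp (by fun_prop) ?_)
      intro t ht
      have h : (0:ℝ) < t := ht
      show t + 1 ∈ Set.Ioi (0:ℝ)
      exact Set.mem_Ioi.2 (by linarith)

lemma Dl_intervalIntegrable (m : ℕ) (w : ℂ) {t : ℝ} (ht : 0 < t) :
    IntervalIntegrable (Dl m w) MeasureTheory.volume t (t+1) := by
  apply ContinuousOn.intervalIntegrable
  apply (Dl_continuousOn m w).mono
  intro s hs
  rw [Set.uIcc_of_le (by linarith)] at hs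
  exact Set.mem_Ioi.2 (lt_of_lt_of_le ht hs.1)

lemma ofReal_cpow_intervalIntegrable (c : ℂ) {t : ℝ} (ht : 0 < t) :
    IntervalIntegrable (fun s : ℝ => ((s:ℝ):ℂ) ^ c) MeasureTheory.volume t (t+1) := by
  apply ContinuousOn.intervalIntegrable
  have hc : ContinuousOn (fun s : ℝ => ((s:ℝ):ℂ) ^ c) (Set.Ioi (0:ℝ)) := by
    apply ContinuousOn.cpow (Complex.continuous_ofReal.continuousOn) continuousOn_const
    intro s hs
    exact ofReal_mem_slitPlane.2 hs
  apply hc.mono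
  intro s hs
  rw [Set.uIcc_of_le (by linarith)] at hs
  exact Set.mem_Ioi.2 (lt_of_lt_of_le ht hs.1)

lemma Dl_differentiable (m : ℕ) {t : ℝ} (ht : 0 < t) :
    Differentiable ℂ (fun w => Dl m w t) := by
  induction m generalizing t with
  | zero =>
      have h : (fun w : ℂ => Dl 0 w t) = fun w => (t:ℂ) ^ (-w) := rfl
      rw [h]
      exact (differentiable_neg).const_cpow (Or.inl (by exact_mod_cast ht.ne'))
  | succ m ih => exact (ih ht).sub (ih (by linarith))

lemma Dl_rec (m : ℕ) (w : ℂ) {t : ℝ} (ht : 0 < t) :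
    Dl (m+1) w t = w * ∫ s in t..(t+1), Dl m (w+1) s := by
  induction m generalizing w t with
  | zero =>
      rcases eq_or_ne w 0 with rfl | hw
      · simp [Dl]
      · have hr : (-w - 1 : ℂ) ≠ -1 := by
          intro h; exact hw (by linear_combination -h)
        have hderiv : ∀ s ∈ Set.uIcc t (t+1),
            HasDerivAt (fun y : ℝ => (y:ℂ) ^ (-w-1+1) / (-w-1+1)) (((s:ℝ):ℂ) ^ (-w-1 : ℂ)) s := by
          intro s hs
          rw [Set.uIcc_of_le (by linarith)] at hs
          exact hasDerivAt_ofReal_cpow_const' (lt_of_lt_of_le ht hs.1).ne' hr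
        have hint := ofReal_cpow_intervalIntegrable (-w-1) ht
        have hFTC := intervalIntegral.integral_eq_sub_of_hasDerivAt hderiv hint
        simp only [show (-w-1+1 : ℂ) = -w by ring] at hFTC
        have hE : ∀ s : ℝ, Dl 0 (w+1) s = ((s:ℝ):ℂ) ^ (-w-1 : ℂ) := by
          intro s
          show ((s:ℝ):ℂ) ^ (-(w+1)) = _
          congr 1
          ring
        simp only [hE]
        rw [hFTC]
        show (t:ℂ)^(-w) - ((t+1:ℝ):ℂ)^(-w) = _
        have hne : (-w : ℂ) ≠ 0 := neg_ne_zero.2 hw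
        field_simp
        ring
  | succ m ih =>
      have h1 : Dl (m+2) w t = Dl (m+1) w t - Dl (m+1) w (t+1) := rfl
      rw [h1, ih w ht, ih w (by linarith)]
      have hshift : (∫ s in (t+1)..(t+1+1), Dl m (w+1) s)
          = ∫ s in t..(t+1), Dl m (w+1) (s+1) := by
        rw [intervalIntegral.integral_comp_add_right (fun s => Dl m (w+1) s) 1]
      rw [hshift, ← mul_sub]
      congr 1
      have h2 : IntervalIntegrable (fun s : ℝ => Dl m (w+1) (s+1))
          MeasureTheory.volume t (t+1) := by
        have h3 := (Dl_intervalIntegrable m (w+1)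
          (show (0:ℝ) < t+1 by linarith)).comp_add_right 1
        simpa using h3
      rw [← intervalIntegral.integral_sub (Dl_intervalIntegrable m (w+1) ht) h2]
      rfl

lemma Dl_norm_le (m : ℕ) (w : ℂ) {t : ℝ} (ht : 0 < t) (hm : 0 ≤ w.re + m) :
    ‖Dl m w t‖ ≤ (∏ j ∈ Finset.range m, ‖w + (j:ℂ)‖) * t ^ (-w.re - m) := by
  induction m generalizing w t with
  | zero =>
      simp only [Dl, Finset.range_zero, Finset.prod_empty, one_mul, Nat.cast_zero, sub_zero]
      rw [Complex.norm_cpow_eq_rpow_re_of_pos ht]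
      simp
  | succ m ih =>
      push_cast
      push_cast at hm
      have hm' : 0 ≤ (w+1).re + m := by
        simp only [Complex.add_re, Complex.one_re]
        linarith
      set P := ∏ j ∈ Finset.range m, ‖(w+1) + (j:ℂ)‖ with hP
      have hPnn : 0 ≤ P := Finset.prod_nonneg fun _ _ => norm_nonneg _
      have hbound : ∀ s ∈ Set.uIoc t (t+1),
          ‖Dl m (w+1) s‖ ≤ P * t ^ (-w.re - ((m:ℝ)+1)) := by
        intro s hs
        rw [Set.uIoc_of_le (by linarith)] at hs
        have hs0 : 0 < s := lt_trans ht hs.1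
        refine le_trans (ih (w+1) hs0 hm') ?_
        apply mul_le_mul_of_nonneg_left _ hPnn
        have he : -(w+1).re - m = -w.re - ((m:ℝ)+1) := by
          simp only [Complex.add_re, Complex.one_re]; ring
        rw [he]
        exact Real.rpow_le_rpow_of_nonpos ht hs.1.le (by linarith)
      have hnorm := intervalIntegral.norm_integral_le_of_norm_le_const hbound
      rw [Dl_rec m w ht, norm_mul]
      have h1 : ‖∫ s in t..(t+1), Dl m (w+1) s‖ ≤ P * t ^ (-w.re - ((m:ℝ)+1)) := by
        simpa using hnorm
      calc ‖w‖ * ‖∫ s in t..(t+1), Dl m (w+1) s‖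
          ≤ ‖w‖ * (P * t ^ (-w.re - ((m:ℝ)+1))) :=
            mul_le_mul_of_nonneg_left h1 (norm_nonneg _)
        _ = (‖w‖ * P) * t ^ (-w.re - ((m:ℝ)+1)) := by ring
        _ = (∏ j ∈ Finset.range (m+1), ‖w + (j:ℂ)‖) * t ^ (-w.re - ((m:ℝ)+1)) := by
            congr 1
            rw [Finset.prod_range_succ']
            simp only [Nat.cast_zero, add_zero]
            rw [mul_comm]
            congr 1
            apply Finset.prod_congr rfl
            intro j _
            congr 1
            push_cast
            ring

section Operator

variable {V : Type} [NormedAddCommGroup V] [NormedSpace ℂ V] [CompleteSpace V]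

/-- The twisted series with `m`-times differenced coefficients. -/
def Sser (A : V ≃ₗᵢ[ℂ] V) (v : V) (b : ℝ) (m : ℕ) (w : ℂ) : V :=
  ∑' n : ℕ, Dl m w ((n:ℝ) + b) • ((A ^ (n+1)) v)

/-- Accumulated boundary terms. -/
def Qb (L : V →L[ℂ] V) (v : V) (b : ℝ) : ℕ → ℂ → V
  | 0, _ => 0
  | m+1, w => L (Qb L v b m w) - Dl m w b • v

/-- The `m`-th analytic continuation candidate. -/
def Fmf (A : V ≃ₗᵢ[ℂ] V) (L B : V →L[ℂ] V) (v : V) (b : ℝ) (m : ℕ) (w : ℂ) : V :=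
  (B ^ m) (Qb L v b m w + Sser A v b m w)

lemma summable_norm_Dl {b : ℝ} (m : ℕ) {w : ℂ} (hb : 1 ≤ b) (hw : 1 - (m:ℝ) < w.re) :
    Summable (fun n : ℕ => ‖Dl m w ((n:ℝ) + b)‖) := by
  set C := ∏ j ∈ Finset.range m, ‖w + (j:ℂ)‖ with hC
  have hCnn : 0 ≤ C := Finset.prod_nonneg fun _ _ => norm_nonneg _
  have hsum : Summable (fun n : ℕ => C * ((n:ℝ)+1) ^ (-w.re - m)) := by
    have h0 : Summable (fun n : ℕ => (n:ℝ) ^ (-w.re - m)) :=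
      Real.summable_nat_rpow.2 (by linarith)
    have h1 : Summable (fun n : ℕ => ((n+1:ℕ):ℝ) ^ (-w.re - m)) :=
      (_root_.summable_nat_add_iff 1).2 h0
    refine (h1.mul_left C).congr fun n => ?_
    push_cast
    ring_nf
  apply Summable.of_nonneg_of_le (fun n => norm_nonneg _) _ hsum
  intro n
  have hn : (0:ℝ) ≤ (n:ℝ) := Nat.cast_nonneg n
  have hpos : (0:ℝ) < (n:ℝ) + b := by linarith
  refine le_trans (Dl_norm_le m w hpos (by linarith)) ?_
  apply mul_le_mul_of_nonneg_left _ hCnn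
  apply Real.rpow_le_rpow_of_nonpos (by linarith) (by linarith) (by linarith)

lemma summable_term (v : V) {b : ℝ} (m : ℕ) {w : ℂ} (hb : 1 ≤ b) (hw : 1 - (m:ℝ) < w.re)
    (g : ℕ → V) (hg : ∀ n, ‖g n‖ = ‖v‖) :
    Summable (fun n : ℕ => Dl m w ((n:ℝ) + b) • g n) := by
  apply Summable.of_norm
  refine Summable.of_nonneg_of_le (fun n => norm_nonneg _) (fun n => ?_)
    (((summable_norm_Dl m hb hw)).mul_right ‖v‖)
  rw [norm_smul, hg n]

lemma Sser_rec (A : V ≃ₗᵢ[ℂ] V) (v : V) {b : ℝ} {L : V →L[ℂ] V}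
    (hL : ∀ y : V, L y = y - A.symm y)
    (m : ℕ) {w : ℂ} (hb : 1 ≤ b) (hw : 1 - (m:ℝ) < w.re) :
    L (Sser A v b m w) = Sser A v b (m+1) w - Dl m w b • v := by
  have hS1 : Summable (fun n : ℕ => Dl m w ((n:ℝ) + b) • ((A ^ (n+1)) v)) :=
    summable_term v m hb hw _ (fun n => (A ^ (n+1)).norm_map v)
  have hS0 : Summable (fun n : ℕ => Dl m w ((n:ℝ) + b) • ((A ^ n) v)) :=
    summable_term v m hb hw _ (fun n => (A ^ n).norm_map v)
  have hS1' : Summable (fun n : ℕ => Dl m w (((n:ℝ)+1) + b) • ((A ^ (n+1)) v)) := by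
    refine ((_root_.summable_nat_add_iff 1).2 hS0).congr fun n => ?_
    have hcast : ((n+1:ℕ):ℝ) + b = ((n:ℝ)+1) + b := by push_cast; ring
    rw [hcast]
  have hmap : A.symm (Sser A v b m w) = ∑' n : ℕ, Dl m w ((n:ℝ) + b) • ((A ^ n) v) := by
    have h := (A.symm.toContinuousLinearEquiv).map_tsum (L := SummationFilter.unconditional ℕ)
      (f := fun n : ℕ => Dl m w ((n:ℝ) + b) • ((A ^ (n+1)) v))
    simp only [LinearIsometryEquiv.coe_toContinuousLinearEquiv] at h
    rw [Sser, h]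
    apply tsum_congr; intro n
    rw [map_smul]
    congr 1
    have hx : ((A ^ (n+1)) v) = A ((A ^ n) v) := by
      rw [pow_succ']
      rfl
    rw [hx, A.symm_apply_apply]
  have hzero : (∑' n : ℕ, Dl m w ((n:ℝ) + b) • ((A ^ n) v))
      = Dl m w b • v + ∑' n : ℕ, Dl m w (((n:ℝ)+1) + b) • ((A ^ (n+1)) v) := by
    rw [Summable.tsum_eq_zero_add hS0]
    congr 1
    · have hcast : ((0:ℕ):ℝ) + b = b := by norm_num
      rw [hcast, pow_zero]
      rfl
    · apply tsum_congr; intro n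
      have hcast : ((n+1:ℕ):ℝ) + b = ((n:ℝ)+1) + b := by push_cast; ring
      rw [hcast]
  have key : L (Sser A v b m w)
      = (∑' n : ℕ, Dl m w ((n:ℝ) + b) • ((A ^ (n+1)) v))
        - (∑' n : ℕ, Dl m w (((n:ℝ)+1) + b) • ((A ^ (n+1)) v)) - Dl m w b • v := by
    rw [hL, hmap, hzero]
    show Sser A v b m w - _ = _
    rw [Sser]
    abel
  rw [key, ← Summable.tsum_sub hS1 hS1']
  congr 1
  rw [Sser]
  apply tsum_congr
  intro n
  rw [← sub_smul]
  congr 1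
  show _ = Dl (m+1) w ((n:ℝ)+b)
  have h : Dl (m+1) w ((n:ℝ)+b) = Dl m w ((n:ℝ)+b) - Dl m w (((n:ℝ)+b)+1) := rfl
  rw [h]
  congr 2
  ring

lemma Fmf_step (A : V ≃ₗᵢ[ℂ] V) (v : V) {b : ℝ} {L B : V →L[ℂ] V}
    (hL : ∀ y : V, L y = y - A.symm y) (hBL : ∀ x : V, B (L x) = x)
    (m : ℕ) {w : ℂ} (hb : 1 ≤ b) (hw : 1 - (m:ℝ) < w.re) :
    Fmf A L B v b (m+1) w = Fmf A L B v b m w := by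
  have hE : Qb L v b (m+1) w + Sser A v b (m+1) w
      = L (Qb L v b m w + Sser A v b m w) := by
    rw [map_add, Sser_rec A v hL m hb hw]
    show L (Qb L v b m w) - Dl m w b • v + _ = _
    abel
  rw [Fmf, hE, pow_succ, Fmf]
  show (B ^ m) (B (L _)) = (B ^ m) _
  rw [hBL]

lemma Fmf_glue (A : V ≃ₗᵢ[ℂ] V) (v : V) {b : ℝ} {L B : V →L[ℂ] V}
    (hL : ∀ y : V, L y = y - A.symm y) (hBL : ∀ x : V, B (L x) = x)
    {j m : ℕ} (hjm : j ≤ m) {w : ℂ} (hb : 1 ≤ b) (hw : 1 - (j:ℝ) < w.re) :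
    Fmf A L B v b j w = Fmf A L B v b m w := by
  induction m, hjm using Nat.le_induction with
  | base => rfl
  | succ m hjm ih =>
      rw [ih, Fmf_step A v hL hBL m hb]
      have h : (1:ℝ) - m ≤ 1 - j := by
        have := (Nat.cast_le (α := ℝ)).2 hjm
        linarith
      linarith

lemma Sser_differentiableAt (A : V ≃ₗᵢ[ℂ] V) (v : V) {b : ℝ}
    (m : ℕ) {w₀ : ℂ} (hb : 1 ≤ b) (hw : 1 - (m:ℝ) < w₀.re) :
    DifferentiableAt ℂ (Sser A v b m) w₀ := by
  set δ := w₀.re - (1 - (m:ℝ)) with hδ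
  have hδ0 : 0 < δ := by simp only [hδ]; linarith
  set ε := δ/2 with hε
  have hε0 : 0 < ε := by positivity
  set K := ‖w₀‖ + ε + m with hK
  have hK0 : 0 ≤ K := by positivity
  set U := Metric.ball w₀ ε with hU
  have hre : ∀ w ∈ U, 1 - (m:ℝ) + ε < w.re := by
    intro w hw'
    have h1 : |(w - w₀).re| ≤ ‖w - w₀‖ := by
      exact Complex.abs_re_le_norm _
    have h2 : ‖w - w₀‖ < ε := by rw [← dist_eq_norm]; exact hw'
    have h3 := abs_lt.1 (lt_of_le_of_lt h1 h2)
    have h4 := h3.1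
    simp only [Complex.sub_re] at h4
    simp only [hε, hδ] at h4 ⊢
    linarith
  have hdiff : DifferentiableOn ℂ (fun w => ∑' n : ℕ,
      Dl m w ((n:ℝ) + b) • ((A ^ (n+1)) v)) U := by
    apply differentiableOn_tsum_of_summable_norm
      (u := fun n : ℕ => (K^m * ‖v‖) * ((n:ℝ)+1) ^ (-1 - ε))
    · have h0 : Summable (fun n : ℕ => (n:ℝ) ^ (-1 - ε)) :=
        Real.summable_nat_rpow.2 (by linarith)
      have h1 : Summable (fun n : ℕ => ((n+1:ℕ):ℝ) ^ (-1 - ε)) :=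
        (_root_.summable_nat_add_iff 1).2 h0
      refine (h1.mul_left (K^m * ‖v‖)).congr fun n => ?_
      push_cast
      ring_nf
    · intro n
      have hn : (0:ℝ) ≤ (n:ℝ) := Nat.cast_nonneg n
      exact ((Dl_differentiable m (by linarith)).differentiableOn).smul_const _
    · exact Metric.isOpen_ball
    · intro n w hw'
      have hwre := hre w hw'
      have hn : (0:ℝ) ≤ (n:ℝ) := Nat.cast_nonneg n
      have hpos : (0:ℝ) < (n:ℝ) + b := by linarith
      rw [norm_smul, (A ^ (n+1)).norm_map v]
      have h1 : ‖Dl m w ((n:ℝ)+b)‖ ≤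
          (∏ j ∈ Finset.range m, ‖w + (j:ℂ)‖) * ((n:ℝ)+b) ^ (-w.re - m) :=
        Dl_norm_le m w hpos (by linarith)
      have hprod : (∏ j ∈ Finset.range m, ‖w + (j:ℂ)‖) ≤ K^m := by
        calc (∏ j ∈ Finset.range m, ‖w + (j:ℂ)‖)
            ≤ ∏ _j ∈ Finset.range m, K := by
              apply Finset.prod_le_prod (fun _ _ => norm_nonneg _)
              intro j hj
              have hj' : (j:ℝ) ≤ m := by
                exact_mod_cast (Finset.mem_range.1 hj).le
              have h2 : ‖w + (j:ℂ)‖ ≤ ‖w‖ + j := by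
                refine le_trans (norm_add_le _ _) ?_
                simp
              have h3 : ‖w‖ ≤ ‖w₀‖ + ε := by
                have h5 := norm_sub_norm_le w w₀
                have h4 : ‖w - w₀‖ < ε := by rw [← dist_eq_norm]; exact hw'
                linarith
              simp only [hK]
              linarith
          _ = K^m := by rw [Finset.prod_const, Finset.card_range]
      have hrp1 : ((n:ℝ)+b) ^ (-w.re - m) ≤ ((n:ℝ)+b) ^ (-1 - ε) := by
        apply Real.rpow_le_rpow_of_exponent_le (by linarith)
        linarith
      have hrp2 : ((n:ℝ)+b) ^ (-1 - ε) ≤ ((n:ℝ)+1) ^ (-1 - ε) := by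
        apply Real.rpow_le_rpow_of_nonpos (by linarith) (by linarith) (by linarith)
      have hnn : (0:ℝ) ≤ ((n:ℝ)+b) ^ (-w.re - m) := Real.rpow_nonneg (by linarith) _
      calc ‖Dl m w ((n:ℝ)+b)‖ * ‖v‖
          ≤ ((∏ j ∈ Finset.range m, ‖w + (j:ℂ)‖) * ((n:ℝ)+b) ^ (-w.re - m)) * ‖v‖ :=
            mul_le_mul_of_nonneg_right h1 (norm_nonneg _)
        _ ≤ (K^m * (((n:ℝ)+1) ^ (-1 - ε))) * ‖v‖ := by
            apply mul_le_mul_of_nonneg_right _ (norm_nonneg _)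
            apply mul_le_mul hprod (le_trans hrp1 hrp2) hnn (by positivity)
        _ = (K^m * ‖v‖) * ((n:ℝ)+1) ^ (-1 - ε) := by ring
  exact (hdiff.differentiableAt (Metric.ball_mem_nhds w₀ hε0))

omit [CompleteSpace V] in
lemma Qb_differentiable (v : V) (L : V →L[ℂ] V) {b : ℝ} (m : ℕ) (hb : 0 < b) :
    Differentiable ℂ (fun w => Qb L v b m w) := by
  induction m with
  | zero =>
      have h : (fun w : ℂ => Qb L v b 0 w) = fun _ => (0:V) := rfl
      rw [h]
      exact differentiable_const _
  | succ m ih =>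
      show Differentiable ℂ (fun w => L (Qb L v b m w) - Dl m w b • v)
      exact (L.differentiable.comp ih).sub ((Dl_differentiable m hb).smul_const v)

end Operator

end ParAux

open ParAux in
theorem parabolic_part_regular_entire
    {V : Type} [NormedAddCommGroup V] [InnerProductSpace ℂ V] [FiniteDimensional ℂ V]
    (A : V ≃ₗᵢ[ℂ] V) (hA : ∀ v : V, A v = v → v = 0)
    (lam : ℝ) (hlam : 0 < lam) (x : ℝ) (hx : x < 1) (k : ℕ) (v : V) :
    ∃ F : ℂ → V, Differentiable ℂ F ∧
      ∀ s : ℂ, 1 / 2 < s.re →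
        F s = ∑' n : ℕ,
          ((((2 / (((n : ℝ) + 1) * lam * (1 - x) + 2)) : ℝ) : ℂ) ^ (2 * s) *
              (((((2 - ((n : ℝ) + 1) * lam) * x + ((n : ℝ) + 1) * lam) /
                    (((n : ℝ) + 1) * lam * (1 - x) + 2) - 1) ^ k : ℝ) : ℂ)) •
            (A ^ (n + 1)) v := by
  classical
  haveI : CompleteSpace V := FiniteDimensional.complete ℂ V
  have hx1 : (0:ℝ) < 1 - x := by linarith
  set a : ℝ := 2 / (lam * (1 - x)) with ha_def
  have ha : 0 < a := by positivity
  set b : ℝ := 1 + a with hb_def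
  have hb : 1 ≤ b := by linarith
  -- the invertible operator I - A⁻¹
  set L : V →L[ℂ] V :=
    ContinuousLinearMap.id ℂ V - (A.symm.toContinuousLinearEquiv : V →L[ℂ] V) with hLdef
  have hL : ∀ y : V, L y = y - A.symm y := by
    intro y
    simp [hLdef, ContinuousLinearMap.sub_apply]
  have hLinj : Function.Injective L := by
    intro u u' huu
    have h1 : L (u - u') = 0 := by rw [map_sub, huu, sub_self]
    have h2 : u - u' - A.symm (u - u') = 0 := by rw [← hL]; exact h1
    have h3 : A.symm (u - u') = u - u' := (sub_eq_zero.1 h2).symm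
    have h4 : A (u - u') = u - u' := by
      conv_lhs => rw [← h3]
      exact A.apply_symm_apply _
    exact sub_eq_zero.1 (hA _ h4)
  have hLsurj : Function.Surjective (L : V →ₗ[ℂ] V) :=
    LinearMap.injective_iff_surjective.1 hLinj
  set Leq : V ≃ₗ[ℂ] V := LinearEquiv.ofBijective (L : V →ₗ[ℂ] V) ⟨hLinj, hLsurj⟩ with hLeq
  set B : V →L[ℂ] V := (Leq.toContinuousLinearEquiv.symm : V →L[ℂ] V) with hBdef
  have hBL : ∀ u : V, B (L u) = u := by
    intro u
    show Leq.toContinuousLinearEquiv.symm (L u) = u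
    have h : L u = Leq.toContinuousLinearEquiv u := rfl
    rw [h, ContinuousLinearEquiv.symm_apply_apply]
  -- index function for gluing
  set M : ℂ → ℕ := fun w => ⌈2 - w.re⌉₊ with hM
  have hMlt : ∀ w : ℂ, 1 - ((M w : ℝ)) < w.re := by
    intro w
    have h1 : 2 - w.re ≤ (M w : ℝ) := Nat.le_ceil _
    linarith
  set Fraw : ℂ → V := fun w => Fmf A L B v b (M w) w with hFraw
  have hFrawEq : ∀ (m : ℕ) (w : ℂ), 1 - (m:ℝ) < w.re → Fraw w = Fmf A L B v b m w := by
    intro m w hw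
    rcases le_total (M w) m with h | h
    · exact Fmf_glue A v hL hBL h hb (hMlt w)
    · exact (Fmf_glue A v hL hBL h hb hw).symm
  have hFrawDiff : Differentiable ℂ Fraw := by
    intro w₀
    set m := M w₀ with hm
    have hw₀ : 1 - (m:ℝ) < w₀.re := hMlt w₀
    have hopen : IsOpen {w : ℂ | 1 - (m:ℝ) < w.re} :=
      isOpen_lt continuous_const Complex.continuous_re
    have hmem : {w : ℂ | 1 - (m:ℝ) < w.re} ∈ nhds w₀ := hopen.mem_nhds hw₀
    have hdiffm : DifferentiableAt ℂ (Fmf A L B v b m) w₀ := by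
      have hE : DifferentiableAt ℂ (fun w => Qb L v b m w + Sser A v b m w) w₀ :=
        ((Qb_differentiable v L m (by linarith)) w₀).add
          (Sser_differentiableAt A v m hb hw₀)
      exact ((B ^ m).differentiable.differentiableAt).comp w₀ hE
    apply hdiffm.congr_of_eventuallyEq
    filter_upwards [hmem] with w hw
    exact hFrawEq m w hw
  -- the final function
  refine ⟨fun s => ((((-(1 - x))^k : ℝ) : ℂ) * ((a:ℝ):ℂ) ^ (2*s + k)) • Fraw (2*s + k),
    ?_, ?_⟩
  · apply Differentiable.smul
    · apply Differentiable.const_mul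
      apply Differentiable.const_cpow
      · fun_prop
      · exact Or.inl (by exact_mod_cast ha.ne')
    · exact hFrawDiff.comp (by fun_prop)
  · intro s hs
    beta_reduce
    set w : ℂ := 2*s + k with hw_def
    have hwre : w.re = 2 * s.re + k := by
      simp [hw_def, Complex.add_re, Complex.mul_re]
    have hw1 : 1 - ((0:ℕ):ℝ) < w.re := by
      have hk : (0:ℝ) ≤ k := Nat.cast_nonneg k
      simp only [Nat.cast_zero, sub_zero, hwre]
      linarith
    rw [hFrawEq 0 w hw1]
    have hF0 : Fmf A L B v b 0 w = Sser A v b 0 w := by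
      rw [Fmf, pow_zero]
      show (Qb L v b 0 w + Sser A v b 0 w) = _
      show ((0:V) + Sser A v b 0 w) = _
      rw [zero_add]
    rw [hF0]
    have hsummable : Summable (fun n : ℕ => Dl 0 w ((n:ℝ) + b) • ((A ^ (n+1)) v)) :=
      summable_term v 0 hb hw1 _ (fun n => (A ^ (n+1)).norm_map v)
    rw [Sser, ← Summable.tsum_const_smul _ hsummable]
    apply tsum_congr
    intro n
    rw [smul_smul]
    congr 1
    -- coefficient identity
    have hn : (0:ℝ) ≤ (n:ℝ) := Nat.cast_nonneg n
    have hD : (0:ℝ) < ((n:ℝ) + 1) * lam * (1 - x) + 2 := by positivity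
    set D : ℝ := ((n:ℝ) + 1) * lam * (1 - x) + 2 with hDdef
    set t : ℝ := (n:ℝ) + b with ht_def
    have ht : (0:ℝ) < t := by simp only [ht_def]; linarith
    have hc : (0:ℝ) < 2 / D := by positivity
    have h1 : ((2 - ((n:ℝ) + 1) * lam) * x + ((n:ℝ) + 1) * lam) / D - 1
        = -(1-x) * (2 / D) := by
      field_simp
      ring
    have h3 : (((2 - ((n:ℝ) + 1) * lam) * x + ((n:ℝ) + 1) * lam) / D - 1) ^ k
        = (-(1-x))^k * (2/D)^k := by
      rw [h1, mul_pow]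
    have h4 : (((2/D : ℝ)):ℂ) ^ (2*s) * (((2/D : ℝ)):ℂ) ^ (k:ℕ)
        = (((2/D : ℝ)):ℂ) ^ w := by
      rw [← Complex.cpow_natCast, ← Complex.cpow_add _ _ (by exact_mod_cast hc.ne')]
    have h5 : (((2/D : ℝ)):ℂ) ^ w = ((a:ℝ):ℂ) ^ w * ((t:ℝ):ℂ) ^ (-w) := by
      have hlx : lam * (1 - x) ≠ 0 := by positivity
      have hval : a * (lam * (1-x)) = 2 := by
        rw [ha_def]; field_simp
      have hkey : a * D = 2 * t := by
        calc a * D = ((n:ℝ)+1) * (a * (lam*(1-x))) + 2*a := by rw [hDdef]; ring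
          _ = ((n:ℝ)+1) * 2 + 2*a := by rw [hval]
          _ = 2 * t := by rw [ht_def, hb_def]; ring
      have h2 : 2 / D = a / t := by
        rw [div_eq_div_iff hD.ne' ht.ne']
        linarith [hkey]
      have h2' : (2/D : ℝ) = a * t⁻¹ := by rw [h2]; field_simp
      rw [h2', Complex.ofReal_mul, Complex.mul_cpow_ofReal_nonneg ha.le (by positivity)]
      congr 1
      rw [Complex.ofReal_inv]
      rw [Complex.inv_cpow _ _ (by
        rw [Complex.arg_ofReal_of_nonneg ht.le]
        exact Real.pi_ne_zero.symm)]
      rw [← Complex.cpow_neg]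
    have hDl0 : Dl 0 w t = ((t:ℝ):ℂ) ^ (-w) := rfl
    symm
    rw [hDl0, h3]
    rw [Complex.ofReal_mul, Complex.ofReal_pow, Complex.ofReal_pow]
    calc (((2/D : ℝ)):ℂ) ^ (2*s) * (((-(1-x):ℝ):ℂ)^k * (((2/D:ℝ)):ℂ)^k)
        = (((-(1-x):ℝ):ℂ))^k * ((((2/D : ℝ)):ℂ) ^ (2*s) * (((2/D:ℝ)):ℂ)^(k:ℕ)) := by
          ring
      _ = (((-(1-x):ℝ):ℂ))^k * (((a:ℝ):ℂ) ^ w * ((t:ℝ):ℂ) ^ (-w)) := by rw [h4, h5]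
      _ = (((-(1-x):ℝ):ℂ))^k * ((a:ℝ):ℂ) ^ w * ((t:ℝ):ℂ) ^ (-w) := by ring
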